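/- Let X be a 3×3 matrix with entries xᵢⱼ, x₁₃ ≠ 0, x₂₃ ≠ 0, and suppose x₁₁ = x₁₃x₂₁/x₂₃ + x₂₂ − x₁₂x₂₃/x₁₃, x₃₁ = x₂₁(x₁₂x₂₃ + x₁₃(x₃₃ − x₂₂))/(x₁₃x₂₃), x₃₂ = x₁₂(x₁₂x₂₃ + x₁₃(x₃₃ − x₂₂))/x₁₃². Let α₀ = det X, α₂ = tr X, and α₁ = the sum of principal 2×2 minors of X (so det(X − ζI) = −ζ³ + α₂ζ² − α₁ζ + α₀). Then 4α₀α₂³ − α₁²α₂² + 4α₁³ − 18α₀α₁α₂ + 27α₀² = 0. -/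

import Mathlib

open Matrix

set_option maxHeartbeats 1000000 in
theorem stmt13 (X : Matrix (Fin 3) (Fin 3) ℂ)
    (h13 : X 0 2 ≠ 0) (h23 : X 1 2 ≠ 0)
    (hx11 : X 0 0 = X 0 2 * X 1 0 / X 1 2 + X 1 1 - X 0 1 * X 1 2 / X 0 2)
    (hx31 : X 2 0 = X 1 0 * (X 0 1 * X 1 2 + X 0 2 * (X 2 2 - X 1 1)) / (X 0 2 * X 1 2))
    (hx32 : X 2 1 = X 0 1 * (X 0 1 * X 1 2 + X 0 2 * (X 2 2 - X 1 1)) / (X 0 2) ^ 2)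
    (a0 a1 a2 : ℂ)
    (ha0 : a0 = X.det)
    (ha2 : a2 = X.trace)
    (ha1 : a1 = (X 0 0 * X 1 1 - X 0 1 * X 1 0) + (X 0 0 * X 2 2 - X 0 2 * X 2 0)
        + (X 1 1 * X 2 2 - X 1 2 * X 2 1)) :
    4 * a0 * a2 ^ 3 - a1 ^ 2 * a2 ^ 2 + 4 * a1 ^ 3 - 18 * a0 * a1 * a2 + 27 * a0 ^ 2 = 0 := by
  rw [Matrix.det_fin_three] at ha0
  rw [Matrix.trace_fin_three] at ha2
  set c : ℂ := X 0 1 / X 0 2 with hc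
  set d : ℂ := X 1 0 / X 1 2 with hd
  have hp : X 0 1 = c * X 0 2 := (div_mul_cancel₀ _ h13).symm
  have hr : X 1 0 = d * X 1 2 := (div_mul_cancel₀ _ h23).symm
  have e11 : X 0 0 = X 0 2 * d + X 1 1 - c * X 1 2 := by
    rw [hx11, hp, hr]
    field_simp
  have e20 : X 2 0 = d * (c * X 1 2 + X 2 2 - X 1 1) := by
    rw [hx31, hp, hr]
    field_simp
    ring
  have e21 : X 2 1 = c * (c * X 1 2 + X 2 2 - X 1 1) := by
    rw [hx32, hp]
    field_simp
    ring
  simp only [e11, e20, e21, hp, hr] at ha0 ha1 ha2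
  set l : ℂ := X 1 1 - c * X 1 2 with hl
  set m : ℂ := a2 - 2 * l with hm
  have h2 : a2 = 2 * l + m := by rw [hm]; ring
  have h1 : a1 = l ^ 2 + 2 * l * m := by rw [hm, ha2, ha1, hl]; ring
  have h0 : a0 = l ^ 2 * m := by rw [hm, ha2, ha0, hl]; ring
  rw [h0, h1, h2]
  ring
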